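/- The LpNML predictive distribution for ridge regression, obtained by normalizing $y \mapsto \frac{c}{\sqrt{2\pi\sigma^2}}\exp\{-\frac{1}{2\hat{\sigma}^2}(y - \hat{\theta}_\lambda^\top x + \hat{\mu})^2\}$ over $y \in \mathbb{R}$, is the Gaussian density with mean $\hat{\theta}_\lambda^\top x - \hat{\mu}$ and variance $\hat{\sigma}^2$, where $\hat{\mu} = \frac{\lambda K_\lambda \hat{\theta}_\lambda^\top P_\lambda x}{1 + \lambda x^\top P_\lambda^2 x}$ and $\hat{\sigma}^2 = \frac{\sigma^2 K_\lambda^2}{1 + \lambda x^\top P_\lambda^2 x}$; moreover the normalization constant equals $c\sqrt{\hat{\sigma}^2/\sigma^2} = c\, K_\lambda/\sqrt{1 + \lambda x^\top P_\lambda^2 x}$. -/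

import Mathlib

open Matrix

/-- Normalizing the luckiness-weighted genie density gives the LpNML predictive
distribution: a Gaussian with mean `θ_λᵀx - μ̂` and variance `σ̂²`, and the
normalization constant equals `c·√(σ̂²/σ²) = c·K_λ/√B`. -/
theorem lpnml_predictive_distribution {N M : ℕ} (σ : ℝ) (hσ : 0 < σ)
    (X : Matrix (Fin N) (Fin M) ℝ) (Y : Fin N → ℝ)
    (x : Fin M → ℝ) (lam : ℝ) (hlam : 0 < lam) (c : ℝ) (hc : 0 < c)
    (Plam : Matrix (Fin M) (Fin M) ℝ)
    (hPlam : Plam = (Xᵀ * X + lam • (1 : Matrix (Fin M) (Fin M) ℝ))⁻¹)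
    (θlam : Fin M → ℝ) (hθlam : θlam = Plam.mulVec (Xᵀ.mulVec Y))
    (Klam : ℝ) (hKlam : Klam = 1 + x ⬝ᵥ Plam.mulVec x)
    (B : ℝ) (hB : B = 1 + lam * (x ⬝ᵥ (Plam * Plam).mulVec x))
    (μh : ℝ) (hμh : μh = lam * Klam * (θlam ⬝ᵥ Plam.mulVec x) / B)
    (σh2 : ℝ) (hσh2 : σh2 = σ ^ 2 * Klam ^ 2 / B)
    (f : ℝ → ℝ)
    (hf : f = fun y => c / Real.sqrt (2 * Real.pi * σ ^ 2) *
      Real.exp (-(y - θlam ⬝ᵥ x + μh) ^ 2 / (2 * σh2))) :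
    (∫ y : ℝ, f y) = c * Real.sqrt (σh2 / σ ^ 2) ∧
      c * Real.sqrt (σh2 / σ ^ 2) = c * Klam / Real.sqrt B ∧
      (∀ y : ℝ, f y / (∫ y' : ℝ, f y') =
        (Real.sqrt (2 * Real.pi * σh2))⁻¹ *
          Real.exp (-(y - (θlam ⬝ᵥ x - μh)) ^ 2 / (2 * σh2))) := by
  -- Positive definiteness of the regularized Gram matrix and its inverse
  have hA : (Xᵀ * X + lam • (1 : Matrix (Fin M) (Fin M) ℝ)).PosDef := by
    apply Matrix.PosDef.posSemidef_add
    · simpa [Matrix.conjTranspose_eq_transpose_of_trivial] using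
        Matrix.posSemidef_conjTranspose_mul_self X
    · rw [Matrix.smul_one_eq_diagonal]
      exact Matrix.posDef_diagonal_iff.mpr fun _ => hlam
  have hP : Plam.PosDef := hPlam ▸ hA.inv
  have hsym : Plamᵀ = Plam := by
    have := hP.isHermitian
    rwa [Matrix.IsHermitian, Matrix.conjTranspose_eq_transpose_of_trivial] at this
  -- Klam > 0
  have hxPx : 0 ≤ x ⬝ᵥ Plam.mulVec x := by
    simpa using hP.posSemidef.dotProduct_mulVec_nonneg x
  have hK0 : 0 < Klam := by rw [hKlam]; linarith
  -- B > 0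
  have hPPx : 0 ≤ x ⬝ᵥ (Plam * Plam).mulVec x := by
    rw [← Matrix.mulVec_mulVec, Matrix.dotProduct_mulVec]
    have hv : x ᵥ* Plam = Plam *ᵥ x := by
      conv_lhs => rw [← hsym]
      rw [Matrix.vecMul_transpose]
    rw [hv]
    simpa using dotProduct_star_self_nonneg (Plam.mulVec x)
  have hB0 : 0 < B := by
    rw [hB]
    nlinarith
  have hσ2 : (0:ℝ) < σ ^ 2 := by positivity
  have hσh2pos : 0 < σh2 := by rw [hσh2]; positivity
  have hπ : (0:ℝ) < Real.pi := Real.pi_pos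
  have h2πσ : (0:ℝ) < 2 * Real.pi * σ ^ 2 := by positivity
  have hsqrt2πσ : 0 < Real.sqrt (2 * Real.pi * σ ^ 2) := Real.sqrt_pos.mpr h2πσ
  -- key square-root identity
  have key : Real.sqrt (2 * Real.pi * σh2) =
      Real.sqrt (2 * Real.pi * σ ^ 2) * Real.sqrt (σh2 / σ ^ 2) := by
    rw [← Real.sqrt_mul (le_of_lt h2πσ)]
    congr 1
    field_simp
  -- the Gaussian integral
  set m := θlam ⬝ᵥ x - μh with hm
  have hfm : f = fun y => c / Real.sqrt (2 * Real.pi * σ ^ 2) *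
      Real.exp (-(1/(2*σh2)) * (y - m) ^ 2) := by
    rw [hf]; funext y; congr 1
    rw [hm]
    have : -(y - θlam ⬝ᵥ x + μh) ^ 2 = -(y - (θlam ⬝ᵥ x - μh)) ^ 2 := by ring
    rw [this]
    field_simp
  have hint : (∫ y : ℝ, f y) = c * Real.sqrt (σh2 / σ ^ 2) := by
    rw [hfm, MeasureTheory.integral_const_mul]
    rw [MeasureTheory.integral_sub_right_eq_self
      (fun y => Real.exp (-(1/(2*σh2)) * y ^ 2)) m]
    rw [integral_gaussian]
    have : Real.sqrt (Real.pi / (1/(2*σh2))) = Real.sqrt (2 * Real.pi * σh2) := by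
      congr 1; field_simp
    rw [this, key]
    field_simp
  refine ⟨hint, ?_, ?_⟩
  · -- c √(σh2/σ²) = c K / √B
    have : σh2 / σ ^ 2 = Klam ^ 2 / B := by
      rw [hσh2]; field_simp
    rw [this, Real.sqrt_div (sq_nonneg Klam), Real.sqrt_sq hK0.le, mul_div_assoc]
  · intro y
    rw [hint, hfm]
    have hI : c * Real.sqrt (σh2 / σ ^ 2) ≠ 0 := by positivity
    rw [div_eq_iff hI]
    have hexp : -(y - θlam ⬝ᵥ x + μh) ^ 2 / (2 * σh2) = -(1/(2*σh2)) * (y - m) ^ 2 := by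
      rw [hm]
      have : -(y - θlam ⬝ᵥ x + μh) ^ 2 = -(y - (θlam ⬝ᵥ x - μh)) ^ 2 := by ring
      rw [this]; field_simp
    have hexp2 : -(y - m) ^ 2 / (2 * σh2) = -(1/(2*σh2)) * (y - m) ^ 2 := by
      field_simp
    rw [hexp2]
    have hs : Real.sqrt (2 * Real.pi * σh2) ≠ 0 := by positivity
    rw [key]
    field_simp
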